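/- If a table r satisfies the order dependency X ↦→ Y (for lists of attributes X and Y), then r satisfies the functional dependency set(X) → set(Y), where set(L) denotes the set of entries of the list L. -/

import Mathlib

/-- `ordLE X t s` : the lexicographic weak order `t ≼_X s` induced by a list
of attributes `X` (each attribute is a function `τ → ℤ`). -/
def ordLE {τ : Type*} : List (τ → ℤ) → τ → τ → Prop
  | [], _, _ => True
  | A :: T, t, s => A t < A s ∨ (A t = A s ∧ ordLE T t s)

/-- The table `r` satisfies the order dependency (OD) `X ↦→ Y`. -/
def satOD {τ : Type*} (r : List τ) (X Y : List (τ → ℤ)) : Prop :=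
  ∀ t ∈ r, ∀ s ∈ r, ordLE X t s → ordLE Y t s

/-- `X` and `Y` are order equivalent over `r` (`X ↔ Y`). -/
def orderEquiv {τ : Type*} (r : List τ) (X Y : List (τ → ℤ)) : Prop :=
  satOD r X Y ∧ satOD r Y X

/-- `X` and `Y` are order compatible over `r` (the OCD `X ~ Y`). -/
def satOCD {τ : Type*} (r : List τ) (X Y : List (τ → ℤ)) : Prop :=
  orderEquiv r (X ++ Y) (Y ++ X)

/-- The table `r` satisfies the functional dependency (FD) `X → Y`. -/
def satFD {τ : Type*} (r : List τ) (X Y : Finset (τ → ℤ)) : Prop :=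
  ∀ t ∈ r, ∀ s ∈ r, (∀ A ∈ X, A t = A s) → ∀ B ∈ Y, B t = B s

/-- Attribute `A` is a constant in the context `Z` over `r`
(the set-based canonical OD `Z : [] ↦→ A`). -/
def constIn {τ : Type*} [DecidableEq (τ → ℤ)] (r : List τ) (Z : Finset (τ → ℤ))
    (A : τ → ℤ) : Prop :=
  ∀ Zp : List (τ → ℤ), Zp.Nodup → Zp.toFinset = Z → satOD r Zp (Zp ++ [A])

/-- Attributes `A` and `B` are order compatible in the context `Z` over `r`
(the set-based canonical OCD `Z : A ~ B`). -/
def ocIn {τ : Type*} [DecidableEq (τ → ℤ)] (r : List τ) (Z : Finset (τ → ℤ))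
    (A B : τ → ℤ) : Prop :=
  ∀ Zp : List (τ → ℤ), Zp.Nodup → Zp.toFinset = Z → satOCD r (Zp ++ [A]) (Zp ++ [B])


lemma ordLE_of_eq {τ : Type*} (X : List (τ → ℤ)) (t s : τ)
    (h : ∀ A ∈ X, A t = A s) : ordLE X t s := by
  induction X with
  | nil => trivial
  | cons A T ih =>
      exact Or.inr ⟨h A List.mem_cons_self, ih fun B hB => h B (List.mem_cons_of_mem _ hB)⟩

lemma eq_of_ordLE_both {τ : Type*} (Y : List (τ → ℤ)) (t s : τ)
    (h1 : ordLE Y t s) (h2 : ordLE Y s t) : ∀ B ∈ Y, B t = B s := by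
  induction Y with
  | nil => intro B hB; cases hB
  | cons A T ih =>
      intro B hB
      rcases h1 with h1 | ⟨e1, h1⟩
      · rcases h2 with h2 | ⟨e2, _⟩
        · omega
        · omega
      · rcases h2 with h2 | ⟨_, h2⟩
        · omega
        · rcases List.mem_cons.1 hB with rfl | hB
          · exact e1
          · exact ih h1 h2 B hB

theorem stmt_0 {τ : Type*} [DecidableEq (τ → ℤ)] (r : List τ) (X Y : List (τ → ℤ))
    (h : satOD r X Y) : satFD r X.toFinset Y.toFinset := by
  intro t ht s hs heq B hB
  have hx : ∀ A ∈ X, A t = A s := fun A hA => heq A (List.mem_toFinset.2 hA)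
  have h1 := h t ht s hs (ordLE_of_eq X t s hx)
  have h2 := h s hs t ht (ordLE_of_eq X s t fun A hA => (hx A hA).symm)
  exact eq_of_ordLE_both Y t s h1 h2 B (List.mem_toFinset.1 hB)
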